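/- Let C_i ⊆ H, i = 0,...,m-1, be nonempty closed convex sets with int(∩_{i=0}^{m-1} C_i) ≠ ∅, and fix r ∈ {2,...,m-1}. Define S_d := T_{C_{((r-1)d-(r-1)) mod m},...,C_{((r-1)d) mod m}} (the r-sets-DR operator on the corresponding sets) and Q := S_m ∘ ... ∘ S_2 ∘ S_1. Then Fix(Q) = ∩_{i=0}^{m-1} C_i. -/

import Mathlib

open scoped RealInnerProductSpace

section Aux
variable {H : Type*} [NormedAddCommGroup H] [InnerProductSpace ℝ H]

private lemma foldl_fixed_aux {n : ℕ} (f : H → Fin n → H) (x : H) (h : ∀ j, f x j = x) :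
    Fin.foldl n f x = x := by
  induction n with
  | zero => simp
  | succ n ih =>
    rw [Fin.foldl_succ, h 0]
    exact ih _ (fun j => h j.succ)

private lemma foldl_qne_aux {n : ℕ} (f : H → Fin n → H) (z : H)
    (h : ∀ (y : H) (j : Fin n), ‖f y j - z‖ ≤ ‖y - z‖) (x : H) :
    ‖Fin.foldl n f x - z‖ ≤ ‖x - z‖ := by
  induction n generalizing x with
  | zero => simp
  | succ n ih =>
    rw [Fin.foldl_succ]
    exact le_trans (ih _ (fun y j => h y j.succ) _) (h x 0)

private lemma foldl_fix_extract_aux {n : ℕ} (f : H → Fin n → H) (B : Set H)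
    (h1 : ∀ (y : H) (j : Fin n), ∀ z ∈ B, ‖f y j - z‖ ≤ ‖y - z‖)
    (h2 : ∀ (y : H) (j : Fin n), (∀ z ∈ B, ‖f y j - z‖ = ‖y - z‖) → f y j = y)
    (x : H) (hx : Fin.foldl n f x = x) : ∀ j, f x j = x := by
  induction n generalizing x with
  | zero => exact fun j => j.elim0
  | succ n ih =>
    have h0 : f x 0 = x := by
      apply h2
      intro z hz
      have hle := h1 x 0 z hz
      have hge : ‖x - z‖ ≤ ‖f x 0 - z‖ := by
        calc ‖x - z‖ = ‖Fin.foldl (n+1) f x - z‖ := by rw [hx]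
          _ = ‖Fin.foldl n (fun y j => f y j.succ) (f x 0) - z‖ := by rw [Fin.foldl_succ]
          _ ≤ ‖f x 0 - z‖ := by
              refine foldl_qne_aux _ z (fun y j => ?_) _
              obtain ⟨z', hz'⟩ : ∃ z', z' ∈ B := ⟨z, hz⟩
              exact h1 y j.succ z hz
      linarith
    rw [Fin.foldl_succ, h0] at hx
    have htail := ih (fun y j => f y j.succ)
      (fun y j => h1 y j.succ) (fun y j => h2 y j.succ) x hx
    intro j
    exact Fin.cases h0 (fun i => htail i) j

private lemma proj_inner_le_aux {C : Set H} (hcv : Convex ℝ C) {p : H} (hp : p ∈ C)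
    (x : H) (hmin : ∀ y ∈ C, ‖x - p‖ ≤ ‖x - y‖) :
    ∀ w ∈ C, ⟪x - p, w - p⟫ ≤ 0 := by
  haveI : Nonempty C := ⟨⟨p, hp⟩⟩
  have hinf : ‖x - p‖ = ⨅ w : C, ‖x - w‖ :=
    le_antisymm (le_ciInf fun w => hmin w w.2)
      (ciInf_le (f := fun w : C => ‖x - w‖) ⟨(0:ℝ), by rintro a ⟨w, rfl⟩; exact norm_nonneg _⟩ ⟨p, hp⟩)
  exact (norm_eq_iInf_iff_real_inner_le_zero hcv hp).mp hinf

private lemma refl_norm_sq_aux (y p z : H) :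
    ‖((2:ℝ) • p - y) - z‖^2 = ‖y - z‖^2 - 4 * ⟪y - p, p - z⟫ := by
  have e1 : y - z = (y - p) + (p - z) := by abel
  have e2 : ((2:ℝ) • p - y) - z = (p - z) - (y - p) := by
    rw [two_smul]; abel
  rw [e1, e2, norm_add_sq_real, norm_sub_sq_real, real_inner_comm (p - z) (y - p)]
  ring

end Aux

/-- For nonempty closed convex sets `C₀,…,C_{m-1}` with `int(⋂ C_i) ≠ ∅` and
`r ∈ {2,…,m-1}`, the operator `Q = S_m ∘ ⋯ ∘ S_1`, where
`S_d` is the `r`-sets-DR operator on `C_{((r-1)d-(r-1)) mod m}, …, C_{((r-1)d) mod m}`,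
satisfies `Fix(Q) = ⋂_{i=0}^{m-1} C_i`. -/
theorem fixedPoints_cyclic_rSetsDR
    {H : Type*} [NormedAddCommGroup H] [InnerProductSpace ℝ H] [CompleteSpace H]
    (m r : ℕ) (hr : 2 ≤ r) (hrm : r ≤ m - 1)
    (C : ℕ → Set H)
    (hne : ∀ i < m, (C i).Nonempty) (hcl : ∀ i < m, IsClosed (C i))
    (hcv : ∀ i < m, Convex ℝ (C i))
    (hint : (interior (⋂ i ∈ Finset.range m, C i)).Nonempty)
    (P : ℕ → H → H)
    (hP : ∀ i < m, ∀ x : H, P i x ∈ C i ∧ ∀ y ∈ C i, ‖x - P i x‖ ≤ ‖x - y‖)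
    (S : ℕ → H → H)
    -- `S d` is the `r`-sets-DR operator on the sets `C_{((r-1)(d-1)+j) mod m}`, `j = 0,…,r-1`
    (hS : ∀ d : ℕ, ∀ x : H, S d x = (1 / 2 : ℝ) • (x +
      Fin.foldl r (fun y (j : Fin r) => (2 : ℝ) • P (((r - 1) * (d - 1) + j.val) % m) y - y) x))
    (Q : H → H)
    -- `Q = S m ∘ ⋯ ∘ S 2 ∘ S 1` (applying `S 1` first)
    (hQ : ∀ x : H, Q x = Fin.foldl m (fun y (d : Fin m) => S (d.val + 1) y) x) :
    Function.fixedPoints Q = ⋂ i ∈ Finset.range m, C i := by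
  have hm : 3 ≤ m := by omega
  have hm0 : 0 < m := by omega
  -- projection is the identity on the set
  have hPid : ∀ i < m, ∀ x ∈ C i, P i x = x := by
    intro i hi x hx
    have h := (hP i hi x).2 x hx
    simp only [sub_self, norm_zero] at h
    have h0 : ‖x - P i x‖ = 0 := le_antisymm h (norm_nonneg _)
    exact (sub_eq_zero.mp (norm_eq_zero.mp h0)).symm
  -- variational characterization of the projection
  have hPchar : ∀ i, i < m → ∀ (x : H), ∀ w ∈ C i, ⟪x - P i x, w - P i x⟫ ≤ 0 := by
    intro i hi x
    exact proj_inner_le_aux (hcv i hi) (hP i hi x).1 x (hP i hi x).2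
  -- reflections are quasi-nonexpansive
  have hRqne : ∀ i, i < m → ∀ (y : H), ∀ z ∈ C i, ‖((2:ℝ) • P i y - y) - z‖ ≤ ‖y - z‖ := by
    intro i hi y z hz
    have hid := refl_norm_sq_aux y (P i y) z
    have hpos : (0:ℝ) ≤ ⟪y - P i y, P i y - z⟫ := by
      have h1 := hPchar i hi y z hz
      have hc : ⟪y - P i y, P i y - z⟫ = - ⟪y - P i y, z - P i y⟫ := by
        rw [← inner_neg_right]; congr 1; abel
      rw [hc]; linarith
    have hsq : ‖((2:ℝ) • P i y - y) - z‖^2 ≤ ‖y - z‖^2 := by rw [hid]; linarith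
    exact (pow_le_pow_iff_left₀ (norm_nonneg _) (norm_nonneg _) two_ne_zero).mp hsq
  ext x
  simp only [Function.fixedPoints, Function.IsFixedPt, Set.mem_setOf_eq, Set.mem_iInter,
    Finset.mem_range]
  constructor
  · -- hard direction
    intro hx
    obtain ⟨z₀, hz₀⟩ := hint
    obtain ⟨ε, hε, hball⟩ := Metric.mem_nhds_iff.mp (mem_interior_iff_mem_nhds.mp hz₀)
    set B := Metric.ball z₀ ε with hB
    have hz₀B : z₀ ∈ B := Metric.mem_ball_self hε
    have hBC : ∀ z ∈ B, ∀ i < m, z ∈ C i := by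
      intro z hz i hi
      have hmem := hball hz
      simp only [Set.mem_iInter, Finset.mem_range] at hmem
      exact hmem i hi
    -- inner fold is quasi-nonexpansive
    have hNqne : ∀ (d : ℕ) (y : H), ∀ z ∈ B,
        ‖Fin.foldl r (fun w (j : Fin r) =>
            (2 : ℝ) • P (((r - 1) * d + j.val) % m) w - w) y - z‖ ≤ ‖y - z‖ := by
      intro d y z hz
      refine foldl_qne_aux _ z (fun w j => ?_) y
      exact hRqne _ (Nat.mod_lt _ hm0) w z (hBC z hz _ (Nat.mod_lt _ hm0))
    -- reflection rigidity: equality of norms on the ball forces fixed point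
    have hRrigid : ∀ i, i < m → ∀ (w : H),
        (∀ z ∈ B, ‖((2:ℝ) • P i w - w) - z‖ = ‖w - z‖) → (2:ℝ) • P i w - w = w := by
      intro i hi w heq
      have hip : ∀ z ∈ B, ⟪w - P i w, P i w - z⟫ = 0 := by
        intro z hz
        have h1 := refl_norm_sq_aux w (P i w) z
        rw [heq z hz] at h1
        linarith
      set v := w - P i w with hv
      have hz1 := hip z₀ hz₀B
      set u := (ε / (2 * (‖v‖ + 1))) • v with hu
      have hnv : (0:ℝ) ≤ ‖v‖ := norm_nonneg v
      have hub : z₀ + u ∈ B := by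
        rw [hB, Metric.mem_ball, dist_eq_norm]
        have e : z₀ + u - z₀ = u := by abel
        rw [e, hu, norm_smul, Real.norm_eq_abs, abs_of_pos (by positivity)]
        rw [div_mul_eq_mul_div, div_lt_iff₀ (by positivity)]
        nlinarith
      have hz2 := hip (z₀ + u) hub
      have hsplit : ⟪v, P i w - (z₀ + u)⟫ = ⟪v, P i w - z₀⟫ - ⟪v, u⟫ := by
        rw [← inner_sub_right]; congr 1; abel
      rw [hsplit, hz1, zero_sub, neg_eq_zero, hu, real_inner_smul_right,
        real_inner_self_eq_norm_sq] at hz2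
      have hveq : v = 0 := by
        by_contra hne'
        have hvpos : 0 < ‖v‖ := norm_pos_iff.mpr hne'
        have hcoef : 0 < ε / (2 * (‖v‖ + 1)) := by positivity
        have hprod := mul_pos hcoef (pow_pos hvpos 2)
        linarith
      have hPw : P i w = w := by
        rw [hv] at hveq
        exact (sub_eq_zero.mp hveq).symm
      rw [hPw, two_smul]; abel
    -- S_d is quasi-nonexpansive toward B
    have hSqne : ∀ (d : Fin m) (y : H), ∀ z ∈ B, ‖S (d.val + 1) y - z‖ ≤ ‖y - z‖ := by
      intro d y z hz
      rw [hS]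
      simp only [Nat.add_sub_cancel]
      set N := Fin.foldl r (fun w (j : Fin r) =>
        (2 : ℝ) • P (((r - 1) * d.val + j.val) % m) w - w) y with hN
      have hNle : ‖N - z‖ ≤ ‖y - z‖ := hNqne d.val y z hz
      have he : (1/2 : ℝ) • (y + N) - z = (1/2 : ℝ) • ((y - z) + (N - z)) := by
        module
      rw [he, norm_smul, Real.norm_eq_abs]
      have h12 : |(1/2 : ℝ)| = 1/2 := by norm_num
      rw [h12]
      have htri := norm_add_le (y - z) (N - z)
      linarith
    -- S_d is rigid: norm equality on the ball forces fixed point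
    have hSrigid : ∀ (d : Fin m) (y : H),
        (∀ z ∈ B, ‖S (d.val + 1) y - z‖ = ‖y - z‖) → S (d.val + 1) y = y := by
      intro d y heq
      have h0 := heq z₀ hz₀B
      rw [hS] at h0 ⊢
      simp only [Nat.add_sub_cancel] at h0 ⊢
      set N := Fin.foldl r (fun w (j : Fin r) =>
        (2 : ℝ) • P (((r - 1) * d.val + j.val) % m) w - w) y with hN
      have hNle : ‖N - z₀‖ ≤ ‖y - z₀‖ := hNqne d.val y z₀ hz₀B
      have he : (1/2 : ℝ) • (y + N) - z₀ = (1/2 : ℝ) • ((y - z₀) + (N - z₀)) := by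
        module
      rw [he, norm_smul, Real.norm_eq_abs] at h0
      have h12 : |(1/2 : ℝ)| = 1/2 := by norm_num
      rw [h12] at h0
      have hsum : ‖(y - z₀) + (N - z₀)‖ = 2 * ‖y - z₀‖ := by linarith
      have hs2 : ‖(y - z₀) + (N - z₀)‖^2 = 4 * ‖y - z₀‖^2 := by rw [hsum]; ring
      have hpar := norm_add_sq_real (y - z₀) (N - z₀)
      have hpar2 := norm_sub_sq_real (y - z₀) (N - z₀)
      have hb2 : ‖N - z₀‖^2 ≤ ‖y - z₀‖^2 := pow_le_pow_left₀ (norm_nonneg _) hNle 2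
      have hd0 : ‖(y - z₀) - (N - z₀)‖^2 ≤ 0 := by linarith
      have hd00 : ‖(y - z₀) - (N - z₀)‖^2 = 0 :=
        le_antisymm hd0 (sq_nonneg _)
      have hyN : (y - z₀) - (N - z₀) = 0 :=
        norm_eq_zero.mp (pow_eq_zero_iff two_ne_zero |>.mp hd00)
      have hNy : N = y := by
        have : y - N = 0 := by rw [← hyN]; abel
        exact (sub_eq_zero.mp this).symm
      rw [hNy, ← two_smul ℝ y, smul_smul]
      norm_num
    -- x is a fixed point of every S_d
    have hSfix : ∀ d : Fin m, S (d.val + 1) x = x := by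
      have hxfix : Fin.foldl m (fun y (d : Fin m) => S (d.val + 1) y) x = x := by
        rw [← hQ]; exact hx
      exact foldl_fix_extract_aux _ B (fun y d z hz => hSqne d y z hz)
        (fun y d h => hSrigid d y h) x hxfix
    -- hence x belongs to every set appearing in every S_d
    have hCmem : ∀ d : Fin m, ∀ j : Fin r, x ∈ C (((r - 1) * d.val + j.val) % m) := by
      intro d j
      have hfix := hSfix d
      rw [hS] at hfix
      simp only [Nat.add_sub_cancel] at hfix
      set N := Fin.foldl r (fun w (j : Fin r) =>
        (2 : ℝ) • P (((r - 1) * d.val + j.val) % m) w - w) x with hN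
      have hNx : N = x := by
        have h2 : (2:ℝ) • ((1/2:ℝ) • (x + N)) = (2:ℝ) • x := by rw [hfix]
        rw [smul_smul] at h2
        norm_num at h2
        rw [two_smul] at h2
        exact add_left_cancel h2
      have hall := foldl_fix_extract_aux
        (fun w (j : Fin r) => (2 : ℝ) • P (((r - 1) * d.val + j.val) % m) w - w) B
        (fun w j z hz => hRqne _ (Nat.mod_lt _ hm0) w z (hBC z hz _ (Nat.mod_lt _ hm0)))
        (fun w j h => hRrigid _ (Nat.mod_lt _ hm0) w h)
        x (by rw [← hN]; exact hNx)
      have hj := hall j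
      have hPx : P (((r - 1) * d.val + j.val) % m) x = x := by
        have h2 : (2:ℝ) • P (((r - 1) * d.val + j.val) % m) x = (2:ℝ) • x :=
          (eq_add_of_sub_eq hj).trans (two_smul ℝ x).symm
        exact smul_right_injective H two_ne_zero h2
      have hmem := (hP (((r - 1) * d.val + j.val) % m) (Nat.mod_lt _ hm0) x).1
      rwa [hPx] at hmem
    -- coverage: every i < m is hit
    intro i hi
    have hr1 : 0 < r - 1 := by omega
    have hd : i / (r - 1) < m := lt_of_le_of_lt (Nat.div_le_self _ _) hi
    have hjlt : i % (r - 1) < r := lt_of_lt_of_le (Nat.mod_lt _ hr1) (by omega)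
    have hmem := hCmem ⟨i / (r - 1), hd⟩ ⟨i % (r - 1), hjlt⟩
    simp only [Fin.val_mk] at hmem
    rwa [Nat.div_add_mod, Nat.mod_eq_of_lt hi] at hmem
  · -- easy direction
    intro hx
    rw [hQ]
    refine foldl_fixed_aux _ x (fun d => ?_)
    rw [hS]
    have hfold : Fin.foldl r (fun y (j : Fin r) =>
        (2 : ℝ) • P (((r - 1) * (d.val + 1 - 1) + j.val) % m) y - y) x = x := by
      refine foldl_fixed_aux _ x (fun j => ?_)
      have hi : ((r - 1) * (d.val + 1 - 1) + j.val) % m < m := Nat.mod_lt _ hm0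
      rw [hPid _ hi x (hx _ hi), two_smul]
      abel
    rw [hfold, ← two_smul ℝ x, smul_smul]
    norm_num
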